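/- Fix R_I > 0, β ∈ (0, 1), γ ∈ (0, 1), and μ > 0; set R_p = β R_I, and for each r_I > 0 set d = γ r_I and r_D = R_I. Then P_F(r_I) → 0 and P_MD(r_I) → 0 as r_I → 0⁺; i.e., the closed-form operating point (P_F, P_D) = (P_F, 1 − P_MD) of listen-before-talk with detection range r_D = R_I approaches the perfect point (0, 1) as r_I/R_I → 0. (Paper's Theorem 2, small-power regime, stated for the closed-form expressions of Proposition 2.) -/

import Mathlib

open MeasureTheory Metric Real Filter

/-- `SI d r₁ r₂` is the area (two-dimensional Lebesgue measure) of the intersection of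
two closed disks in the plane of radii `r₁` and `r₂` whose centers are at distance `d`. -/
noncomputable def SI (d r₁ r₂ : ℝ) : ℝ :=
  (volume (closedBall (0 : EuclideanSpace ℝ (Fin 2)) r₁ ∩
    closedBall (EuclideanSpace.single (0 : Fin 2) d) r₂)).toReal

/-- Closed-form false-alarm probability of listen-before-talk (Proposition 2, eq. (6)):
`P_F = 1 − exp(−μ(π r_D² − S_I(d, r_D, R_I) − ∫_{S_o(r_D)} g))`, where
`g(x) = S_I(‖x − a‖, R_p, r_I)/(π R_p²)` and `S_o(r_D) = D(a, min(r_D, r_I+R_p)) \ D(b, R_I)`. -/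
noncomputable def pF (a b : EuclideanSpace ℝ (Fin 2)) (μ R_p R_I r_I d r_D : ℝ) : ℝ :=
  1 - Real.exp (-μ * (π * r_D ^ 2 - SI d r_D R_I -
    ∫ x in closedBall a (min r_D (r_I + R_p)) \ closedBall b R_I,
      SI ‖x - a‖ R_p r_I / (π * R_p ^ 2)))

/-- Closed-form miss-detection probability of listen-before-talk (Proposition 2, eq. (7)). -/
noncomputable def pMD (a b : EuclideanSpace ℝ (Fin 2)) (μ R_p R_I r_I d r_D : ℝ) : ℝ :=
  (Real.exp (-μ * (π * r_D ^ 2)) -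
    Real.exp (-μ * (π * (r_D ^ 2 + R_I ^ 2) - SI d r_D R_I +
      ∫ x in (closedBall a (r_I + R_p) \ closedBall b R_I) \
              (closedBall a (min r_D (r_I + R_p)) \ closedBall b R_I),
        SI ‖x - a‖ R_p r_I / (π * R_p ^ 2)))) /
  (1 - Real.exp (-μ * ((∫ x in closedBall a (r_I + R_p) \ closedBall b R_I,
      SI ‖x - a‖ R_p r_I / (π * R_p ^ 2)) + π * R_I ^ 2)))

lemma vol2 (x : EuclideanSpace ℝ (Fin 2)) (r : ℝ) (hr : 0 ≤ r) :
    volume (closedBall x r) = ENNReal.ofReal (π * r ^ 2) := by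
  rw [EuclideanSpace.volume_closedBall]
  simp only [Fintype.card_fin]
  rw [show ((2:ℕ) : ℝ) / 2 + 1 = 2 by norm_num, Real.Gamma_two]
  rw [← ENNReal.ofReal_pow hr, ← ENNReal.ofReal_mul (by positivity)]
  congr 1
  rw [div_one, sq_sqrt pi_pos.le]
  ring

lemma SI_le (d r R : ℝ) (hr : 0 ≤ r) : SI d r R ≤ π * r ^ 2 := by
  have h := measure_mono (μ := volume)
    (Set.inter_subset_left (s := closedBall (0 : EuclideanSpace ℝ (Fin 2)) r)
      (t := closedBall (EuclideanSpace.single (0 : Fin 2) d) R))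
  rw [vol2 _ _ hr] at h
  calc SI d r R ≤ (ENNReal.ofReal (π * r ^ 2)).toReal :=
        ENNReal.toReal_mono ENNReal.ofReal_ne_top h
    _ = π * r ^ 2 := ENNReal.toReal_ofReal (by positivity)

lemma SI_ge (d r : ℝ) (hd : 0 ≤ d) (hdr : d ≤ r) : π * (r - d) ^ 2 ≤ SI d r r := by
  have hsub : closedBall (0 : EuclideanSpace ℝ (Fin 2)) (r - d) ⊆
      closedBall (0 : EuclideanSpace ℝ (Fin 2)) r ∩
        closedBall (EuclideanSpace.single (0 : Fin 2) d) r := by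
    intro x hx
    rw [mem_closedBall, dist_zero_right] at hx
    constructor
    · rw [mem_closedBall, dist_zero_right]; linarith
    · rw [mem_closedBall]
      calc dist x (EuclideanSpace.single (0 : Fin 2) d)
          ≤ ‖x‖ + ‖EuclideanSpace.single (0 : Fin 2) d‖ := dist_le_norm_add_norm x _
        _ = ‖x‖ + |d| := by rw [EuclideanSpace.norm_single]; rfl
        _ ≤ (r - d) + d := by rw [abs_of_nonneg hd]; linarith
        _ = r := by ring
  have h := measure_mono (μ := volume) hsub
  rw [vol2 _ _ (by linarith)] at h
  have := ENNReal.toReal_mono ?_ h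
  · rwa [ENNReal.toReal_ofReal (by positivity)] at this
  · have hfin := measure_mono (μ := volume)
      (Set.inter_subset_left (s := closedBall (0 : EuclideanSpace ℝ (Fin 2)) r)
        (t := closedBall (EuclideanSpace.single (0 : Fin 2) d) r))
    rw [vol2 _ _ (by linarith)] at hfin
    exact ne_top_of_le_ne_top ENNReal.ofReal_ne_top hfin

/-- Paper's Theorem 2, small-power regime: with `R_p = β R_I`, `d = γ r_I` and detection
range `r_D = R_I`, both `P_F → 0` and `P_MD → 0` as `r_I → 0⁺`. -/
theorem lbt_perfect_detection_small_power (R_I β γ μ : ℝ)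
    (hRI : 0 < R_I) (hβ : β ∈ Set.Ioo (0:ℝ) 1) (hγ : γ ∈ Set.Ioo (0:ℝ) 1) (hμ : 0 < μ)
    (a b : ℝ → EuclideanSpace ℝ (Fin 2))
    (hab : ∀ r_I : ℝ, 0 < r_I → dist (a r_I) (b r_I) = γ * r_I) :
    Tendsto (fun r_I : ℝ => pF (a r_I) (b r_I) μ (β * R_I) R_I r_I (γ * r_I) R_I)
      (nhdsWithin 0 (Set.Ioi 0)) (nhds 0) ∧
    Tendsto (fun r_I : ℝ => pMD (a r_I) (b r_I) μ (β * R_I) R_I r_I (γ * r_I) R_I)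
      (nhdsWithin 0 (Set.Ioi 0)) (nhds 0) := by
  obtain ⟨hβ0, hβ1⟩ := hβ
  obtain ⟨hγ0, hγ1⟩ := hγ
  set ε : ℝ := (1 - β) * R_I / (1 + γ) with hε
  have hεpos : 0 < ε := by
    have h1 : (0:ℝ) < 1 - β := by linarith
    have h2 : (0:ℝ) < 1 + γ := by linarith
    positivity
  have hεRI : ε ≤ R_I := by
    rw [hε, div_le_iff₀ (by linarith)]
    nlinarith
  have hIoo : Set.Ioo (0:ℝ) ε ∈ nhdsWithin (0:ℝ) (Set.Ioi 0) :=
    Ioo_mem_nhdsGT_of_mem (by constructor <;> simp [hεpos])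
  -- key subset fact
  have key : ∀ r ∈ Set.Ioo (0:ℝ) ε,
      closedBall (a r) (r + β * R_I) ⊆ closedBall (b r) R_I := by
    rintro r ⟨hr0, hrε⟩ x hx
    rw [mem_closedBall] at hx ⊢
    have h1 : dist x (b r) ≤ dist x (a r) + dist (a r) (b r) := dist_triangle _ _ _
    rw [hab r hr0] at h1
    have : r * (1 + γ) < (1 - β) * R_I := by
      rw [hε, lt_div_iff₀ (by linarith)] at hrε
      linarith [hrε]
    nlinarith
  -- emptiness of the three sets, hence the three integrals vanish
  have hempty1 : ∀ r ∈ Set.Ioo (0:ℝ) ε,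
      closedBall (a r) (min R_I (r + β * R_I)) \ closedBall (b r) R_I = ∅ := by
    intro r hr
    exact Set.diff_eq_empty.mpr
      ((closedBall_subset_closedBall (min_le_right _ _)).trans (key r hr))
  have hempty2 : ∀ r ∈ Set.Ioo (0:ℝ) ε,
      closedBall (a r) (r + β * R_I) \ closedBall (b r) R_I = ∅ := by
    intro r hr
    exact Set.diff_eq_empty.mpr (key r hr)
  -- the SI function along the path
  set h : ℝ → ℝ := fun r => SI (γ * r) R_I R_I with hh
  have hSIlim : Tendsto h (nhdsWithin (0:ℝ) (Set.Ioi 0)) (nhds (π * R_I ^ 2)) := by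
    have hlow : Tendsto (fun r : ℝ => π * (R_I - γ * r) ^ 2)
        (nhdsWithin (0:ℝ) (Set.Ioi 0)) (nhds (π * R_I ^ 2)) := by
      have h0 := (Continuous.tendsto (by fun_prop : Continuous
          (fun r : ℝ => π * (R_I - γ * r) ^ 2)) 0)
      have := h0.mono_left (nhdsWithin_le_nhds (s := Set.Ioi (0:ℝ)))
      simpa using this
    refine tendsto_of_tendsto_of_tendsto_of_le_of_le' hlow tendsto_const_nhds ?_ ?_
    · filter_upwards [hIoo] with r hr
      refine SI_ge (γ * r) R_I (mul_nonneg hγ0.le hr.1.le) ?_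
      have := hr.2
      nlinarith [hεRI, hr.1]
    · filter_upwards [hIoo] with r hr
      exact SI_le (γ * r) R_I R_I hRI.le
  constructor
  · -- pF
    have heq : (fun r : ℝ => pF (a r) (b r) μ (β * R_I) R_I r (γ * r) R_I)
        =ᶠ[nhdsWithin (0:ℝ) (Set.Ioi 0)]
        (fun r : ℝ => 1 - Real.exp (-μ * (π * R_I ^ 2 - h r))) := by
      filter_upwards [hIoo] with r hr
      unfold pF
      rw [hempty1 r hr]
      simp [hh]
    refine Tendsto.congr' heq.symm ?_
    have hcont : Tendsto (fun t : ℝ => 1 - Real.exp (-μ * (π * R_I ^ 2 - t)))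
        (nhds (π * R_I ^ 2)) (nhds 0) := by
      have := (Continuous.tendsto (by fun_prop : Continuous
          (fun t : ℝ => 1 - Real.exp (-μ * (π * R_I ^ 2 - t)))) (π * R_I ^ 2))
      simpa using this
    exact hcont.comp hSIlim
  · -- pMD
    have heq : (fun r : ℝ => pMD (a r) (b r) μ (β * R_I) R_I r (γ * r) R_I)
        =ᶠ[nhdsWithin (0:ℝ) (Set.Ioi 0)]
        (fun r : ℝ => (Real.exp (-μ * (π * R_I ^ 2)) -
          Real.exp (-μ * (π * (R_I ^ 2 + R_I ^ 2) - h r))) /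
          (1 - Real.exp (-μ * (π * R_I ^ 2)))) := by
      filter_upwards [hIoo] with r hr
      unfold pMD
      rw [hempty2 r hr]
      simp [hh]
    refine Tendsto.congr' heq.symm ?_
    have hden : (1 : ℝ) - Real.exp (-μ * (π * R_I ^ 2)) ≠ 0 := by
      have : Real.exp (-μ * (π * R_I ^ 2)) < 1 := by
        rw [Real.exp_lt_one_iff]
        have : 0 < μ * (π * R_I ^ 2) := by positivity
        linarith
      linarith
    have hcont : Tendsto (fun t : ℝ => (Real.exp (-μ * (π * R_I ^ 2)) -
        Real.exp (-μ * (π * (R_I ^ 2 + R_I ^ 2) - t))) /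
        (1 - Real.exp (-μ * (π * R_I ^ 2)))) (nhds (π * R_I ^ 2)) (nhds 0) := by
      have hc : Continuous (fun t : ℝ => (Real.exp (-μ * (π * R_I ^ 2)) -
          Real.exp (-μ * (π * (R_I ^ 2 + R_I ^ 2) - t))) /
          (1 - Real.exp (-μ * (π * R_I ^ 2)))) :=
        Continuous.div_const (by fun_prop) _
      have := hc.tendsto (π * R_I ^ 2)
      have hval : (Real.exp (-μ * (π * R_I ^ 2)) -
          Real.exp (-μ * (π * (R_I ^ 2 + R_I ^ 2) - π * R_I ^ 2))) /
          (1 - Real.exp (-μ * (π * R_I ^ 2))) = 0 := by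
        rw [show π * (R_I ^ 2 + R_I ^ 2) - π * R_I ^ 2 = π * R_I ^ 2 by ring]
        simp
      rwa [hval] at this
    exact hcont.comp hSIlim
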